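/- arXiv:1208.2463 — 2 statements merged into one kernel-verified Lean document; each statement's English description precedes it below -/
import Mathlib

section
/- The number of linear subgraphs |𝓛(H)| of a semistable directed multigraph H is invariant under contraction of contractible edges, hence it is a Weyl function. -/
open Relation

structure MDigraph where
  V : Type
  E : Type
  [hV : Finite V]
  [hE : Finite E]
  src : E → V
  tgt : E → V

attribute [instance] MDigraph.hV MDigraph.hE

namespace MDigraph

noncomputable def degOut (G : MDigraph) (v : G.V) : ℕ := Nat.card {e : G.E // G.src e = v}
noncomputable def degIn (G : MDigraph) (v : G.V) : ℕ := Nat.card {e : G.E // G.tgt e = v}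

def Semistable (G : MDigraph) : Prop :=
  ∀ v : G.V, 1 ≤ G.degIn v ∧ 1 ≤ G.degOut v ∧ 3 ≤ G.degIn v + G.degOut v

def Stable (G : MDigraph) : Prop :=
  ∀ v : G.V, 2 ≤ G.degIn v ∧ 2 ≤ G.degOut v

def Contractible (G : MDigraph) (e : G.E) : Prop :=
  G.src e ≠ G.tgt e ∧ (G.degOut (G.src e) = 1 ∨ G.degIn (G.tgt e) = 1)

def mergeRel (G : MDigraph) (e0 : G.E) (a b : G.V) : Prop :=
  a = b ∨ ((a = G.src e0 ∨ a = G.tgt e0) ∧ (b = G.src e0 ∨ b = G.tgt e0))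

def contract (G : MDigraph) (e0 : G.E) : MDigraph where
  V := Quot (G.mergeRel e0)
  E := {e : G.E // e ≠ e0}
  src e := Quot.mk _ (G.src e.1)
  tgt e := Quot.mk _ (G.tgt e.1)

structure Iso (G H : MDigraph) where
  vEquiv : G.V ≃ H.V
  eEquiv : G.E ≃ H.E
  src_map : ∀ e, H.src (eEquiv e) = vEquiv (G.src e)
  tgt_map : ∀ e, H.tgt (eEquiv e) = vEquiv (G.tgt e)

def Adj (G : MDigraph) (a b : G.V) : Prop := ∃ e, G.src e = a ∧ G.tgt e = b

def Strong (G : MDigraph) : Prop := ∀ a b : G.V, ReflTransGen G.Adj a b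

def ContractStep (G H : MDigraph) : Prop :=
  ∃ e0 : G.E, G.Contractible e0 ∧ Nonempty (Iso (G.contract e0) H)

def IsStabilization (G H : MDigraph) : Prop :=
  ReflTransGen ContractStep G H ∧ H.Stable

def Stabilizable (G : MDigraph) : Prop := ∃ H, G.IsStabilization H

def IsLinear (G : MDigraph) (L : Set G.E) : Prop :=
  ∀ v : G.V, Nat.card {e : G.E // e ∈ L ∧ G.src e = v} = Nat.card {e : G.E // e ∈ L ∧ G.tgt e = v}
    ∧ Nat.card {e : G.E // e ∈ L ∧ G.src e = v} ≤ 1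

def LAdj (G : MDigraph) (L : Set G.E) (a b : G.V) : Prop := ∃ e ∈ L, G.src e = a ∧ G.tgt e = b

def supp (G : MDigraph) (L : Set G.E) : Set G.V := {v | ∃ e ∈ L, G.src e = v ∨ G.tgt e = v}

noncomputable def components (G : MDigraph) (L : Set G.E) : ℕ :=
  Nat.card (Quot (fun a b : G.supp L => G.LAdj L a.1 b.1))

noncomputable def adjMatrix (G : MDigraph) : Matrix G.V G.V ℤ :=
  Matrix.of fun a b => (Nat.card {e : G.E // G.src e = a ∧ G.tgt e = b} : ℤ)

open Classical in
noncomputable def detIA (G : MDigraph) : ℤ :=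
  letI := Fintype.ofFinite G.V
  ((1 : Matrix G.V G.V ℤ) - G.adjMatrix).det

noncomputable def weight (G : MDigraph) : ℤ := (Nat.card G.E : ℤ) - (Nat.card G.V : ℤ)

noncomputable def numLinear (G : MDigraph) : ℕ := Nat.card {L : Set G.E // G.IsLinear L}

end MDigraph

noncomputable example (G : MDigraph) (C : ℤ) : ℤ := ∑ᶠ L : {L : Set G.E // G.IsLinear L}, C ^ G.components L.1

namespace MDigraph

section Helpers

lemma card_split {α : Type} [Finite α] (p q : α → Prop) :
    Nat.card {x // p x} = Nat.card {x // p x ∧ q x} + Nat.card {x // p x ∧ ¬ q x} := by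
  classical
  rw [← Nat.card_sum]
  apply Nat.card_congr
  exact ((Equiv.sumCompl (fun y : {x // p x} => q y.1)).symm.trans
    (Equiv.sumCongr (Equiv.subtypeSubtypeEquivSubtypeInter p q)
      (Equiv.subtypeSubtypeEquivSubtypeInter p (fun x => ¬ q x))))

lemma merge_equivalence (G : MDigraph) (e0 : G.E) : Equivalence (G.mergeRel e0) := by
  constructor
  · intro a; exact Or.inl rfl
  · intro a b h
    rcases h with rfl | ⟨h1, h2⟩
    · exact Or.inl rfl
    · exact Or.inr ⟨h2, h1⟩
  · intro a b c hab hbc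
    rcases hab with rfl | ⟨h1, h2⟩
    · exact hbc
    · rcases hbc with rfl | ⟨h3, h4⟩
      · exact Or.inr ⟨h1, h2⟩
      · exact Or.inr ⟨h1, h4⟩

lemma quot_mk_eq_iff (G : MDigraph) (e0 : G.E) (a b : G.V) :
    (Quot.mk (G.mergeRel e0) a = Quot.mk (G.mergeRel e0) b) ↔ G.mergeRel e0 a b :=
  (Quot.eq).trans (merge_equivalence G e0).eqvGen_iff

end Helpers

end MDigraph
namespace MDigraph

lemma Iso.isLinear {G H : MDigraph} (φ : Iso G H) {L : Set G.E} (hL : G.IsLinear L) :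
    H.IsLinear (φ.eEquiv.symm ⁻¹' L) := by
  intro v
  have hsrc : ∀ e : H.E, (H.src e = v ↔ G.src (φ.eEquiv.symm e) = φ.vEquiv.symm v) := by
    intro e
    have := φ.src_map (φ.eEquiv.symm e)
    rw [Equiv.apply_symm_apply] at this
    rw [this]
    exact (Equiv.apply_eq_iff_eq_symm_apply _)
  have htgt : ∀ e : H.E, (H.tgt e = v ↔ G.tgt (φ.eEquiv.symm e) = φ.vEquiv.symm v) := by
    intro e
    have := φ.tgt_map (φ.eEquiv.symm e)
    rw [Equiv.apply_symm_apply] at this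
    rw [this]
    exact (Equiv.apply_eq_iff_eq_symm_apply _)
  have e1 : {e : H.E // e ∈ φ.eEquiv.symm ⁻¹' L ∧ H.src e = v} ≃
      {e : G.E // e ∈ L ∧ G.src e = φ.vEquiv.symm v} := by
    refine (Equiv.subtypeEquiv φ.eEquiv.symm ?_)
    intro e
    simp only [Set.mem_preimage]
    exact and_congr Iff.rfl (hsrc e)
  have e2 : {e : H.E // e ∈ φ.eEquiv.symm ⁻¹' L ∧ H.tgt e = v} ≃
      {e : G.E // e ∈ L ∧ G.tgt e = φ.vEquiv.symm v} := by
    refine (Equiv.subtypeEquiv φ.eEquiv.symm ?_)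
    intro e
    simp only [Set.mem_preimage]
    exact and_congr Iff.rfl (htgt e)
  rw [Nat.card_congr e1, Nat.card_congr e2]
  exact hL (φ.vEquiv.symm v)

def Iso.symm {G H : MDigraph} (φ : Iso G H) : Iso H G where
  vEquiv := φ.vEquiv.symm
  eEquiv := φ.eEquiv.symm
  src_map e := by rw [Equiv.eq_symm_apply, ← φ.src_map, Equiv.apply_symm_apply]
  tgt_map e := by rw [Equiv.eq_symm_apply, ← φ.tgt_map, Equiv.apply_symm_apply]

lemma Iso.numLinear_eq {G H : MDigraph} (φ : Iso G H) : G.numLinear = H.numLinear := by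
  apply Nat.card_congr
  refine ⟨fun L => ⟨φ.eEquiv.symm ⁻¹' L.1, φ.isLinear L.2⟩,
    fun L' => ⟨φ.eEquiv ⁻¹' L'.1, ?_⟩, fun L => ?_, fun L' => ?_⟩
  · have := φ.symm.isLinear L'.2
    simpa [Iso.symm] using this
  · apply Subtype.ext
    ext e
    simp
  · apply Subtype.ext
    ext e
    simp

end MDigraph
namespace MDigraph

def rev (G : MDigraph) : MDigraph where
  V := G.V
  E := G.E
  src := G.tgt
  tgt := G.src

lemma rev_isLinear (G : MDigraph) (L : Set G.E) : G.rev.IsLinear L ↔ G.IsLinear L := by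
  constructor <;> intro h v <;> obtain ⟨h1, h2⟩ := h v
  · exact ⟨h1.symm, h1 ▸ h2⟩
  · exact ⟨h1.symm, h1 ▸ h2⟩

lemma rev_numLinear (G : MDigraph) : G.rev.numLinear = G.numLinear :=
  Nat.card_congr (Equiv.subtypeEquivRight fun L => rev_isLinear G L)

lemma rev_mergeRel (G : MDigraph) (e0 : G.E) (a b : G.V) :
    G.rev.mergeRel e0 a b ↔ G.mergeRel e0 a b := by
  simp only [mergeRel, rev]
  tauto

def revContractIso (G : MDigraph) (e0 : G.E) :
    Iso (G.rev.contract e0) ((G.contract e0).rev) where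
  vEquiv := Quot.congr (Equiv.refl G.V) (by
    intro a b
    exact rev_mergeRel G e0 a b)
  eEquiv := Equiv.refl _
  src_map e := rfl
  tgt_map e := rfl

end MDigraph
namespace MDigraph

def contractSet (G : MDigraph) (e0 : G.E) (L : Set G.E) : Set (G.contract e0).E :=
  {e : {e : G.E // e ≠ e0} | e.1 ∈ L}

def expandSet (G : MDigraph) (e0 : G.E) (L' : Set (G.contract e0).E) : Set G.E :=
  {e : G.E | (∃ h : e ≠ e0, (⟨e, h⟩ : {e : G.E // e ≠ e0}) ∈ L') ∨
    (e = e0 ∧ ∃ e' : {e : G.E // e ≠ e0}, e' ∈ L' ∧ G.tgt e'.1 = G.src e0)}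

lemma mem_contractSet (G : MDigraph) (e0 : G.E) (L : Set G.E) (e : {e : G.E // e ≠ e0}) :
    e ∈ G.contractSet e0 L ↔ e.1 ∈ L := Iff.rfl

lemma mem_expandSet_ne (G : MDigraph) (e0 : G.E) (L' : Set (G.contract e0).E) (e : G.E)
    (h : e ≠ e0) : e ∈ G.expandSet e0 L' ↔ (⟨e, h⟩ : {e : G.E // e ≠ e0}) ∈ L' := by
  constructor
  · rintro (⟨h', hm⟩ | ⟨rfl, _⟩)
    · exact hm
    · exact absurd rfl h
  · intro hm; exact Or.inl ⟨h, hm⟩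

lemma mem_expandSet_e0 (G : MDigraph) (e0 : G.E) (L' : Set (G.contract e0).E) :
    e0 ∈ G.expandSet e0 L' ↔
      ∃ e' : {e : G.E // e ≠ e0}, e' ∈ L' ∧ G.tgt e'.1 = G.src e0 := by
  constructor
  · rintro (⟨h', _⟩ | ⟨_, hm⟩)
    · exact absurd rfl h'
    · exact hm
  · intro hm; exact Or.inr ⟨rfl, hm⟩

end MDigraph
namespace MDigraph

lemma forced_src (G : MDigraph) (e0 : G.E) (h1 : G.degOut (G.src e0) = 1) :
    ∀ e : G.E, G.src e = G.src e0 → e = e0 := by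
  have hsub : Subsingleton {e : G.E // G.src e = G.src e0} :=
    (Nat.card_eq_one_iff_unique.mp h1).1
  intro e he
  exact congrArg Subtype.val (hsub.elim ⟨e, he⟩ ⟨e0, rfl⟩)

/-- counting at an unmerged class -/
lemma class_ne (G : MDigraph) (e0 : G.E) (P : {e : G.E // e ≠ e0} → Prop) (f : G.E → G.V)
    (x : G.V) (hxu : x ≠ G.src e0) (hxv : x ≠ G.tgt e0) :
    Nat.card {e : {e : G.E // e ≠ e0} //
        P e ∧ Quot.mk (G.mergeRel e0) (f e.1) = Quot.mk (G.mergeRel e0) x}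
      = Nat.card {e : {e : G.E // e ≠ e0} // P e ∧ f e.1 = x} := by
  apply Nat.card_congr
  apply Equiv.subtypeEquivRight
  intro e
  rw [quot_mk_eq_iff]
  constructor
  · rintro ⟨hP, h | ⟨_, hx | hx⟩⟩
    · exact ⟨hP, h⟩
    · exact absurd hx hxu
    · exact absurd hx hxv
  · rintro ⟨hP, h⟩
    exact ⟨hP, Or.inl h⟩

/-- src-counting at the merged class, when the only edge out of `src e0` is `e0` -/
lemma src_u (G : MDigraph) (e0 : G.E) (h1 : G.degOut (G.src e0) = 1)
    (P : {e : G.E // e ≠ e0} → Prop) :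
    Nat.card {e : {e : G.E // e ≠ e0} //
        P e ∧ Quot.mk (G.mergeRel e0) (G.src e.1) = Quot.mk (G.mergeRel e0) (G.src e0)}
      = Nat.card {e : {e : G.E // e ≠ e0} // P e ∧ G.src e.1 = G.tgt e0} := by
  apply Nat.card_congr
  apply Equiv.subtypeEquivRight
  intro e
  rw [quot_mk_eq_iff]
  constructor
  · rintro ⟨hP, h | ⟨hx | hx, _⟩⟩
    · exact absurd (G.forced_src e0 h1 e.1 h) e.2
    · exact absurd (G.forced_src e0 h1 e.1 hx) e.2
    · exact ⟨hP, hx⟩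
  · rintro ⟨hP, h⟩
    exact ⟨hP, Or.inr ⟨Or.inr h, Or.inl rfl⟩⟩

/-- tgt-counting at the merged class -/
lemma tgt_u (G : MDigraph) (e0 : G.E) (hne : G.src e0 ≠ G.tgt e0)
    (P : {e : G.E // e ≠ e0} → Prop) :
    Nat.card {e : {e : G.E // e ≠ e0} //
        P e ∧ Quot.mk (G.mergeRel e0) (G.tgt e.1) = Quot.mk (G.mergeRel e0) (G.src e0)}
      = Nat.card {e : {e : G.E // e ≠ e0} // P e ∧ G.tgt e.1 = G.src e0}
        + Nat.card {e : {e : G.E // e ≠ e0} // P e ∧ G.tgt e.1 = G.tgt e0} := by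
  have hiff : ∀ e : {e : G.E // e ≠ e0},
      (P e ∧ Quot.mk (G.mergeRel e0) (G.tgt e.1) = Quot.mk (G.mergeRel e0) (G.src e0))
        ↔ (P e ∧ (G.tgt e.1 = G.src e0 ∨ G.tgt e.1 = G.tgt e0)) := by
    intro e
    rw [quot_mk_eq_iff]
    constructor
    · rintro ⟨hP, h | ⟨hx, _⟩⟩
      · exact ⟨hP, Or.inl h⟩
      · exact ⟨hP, hx⟩
    · rintro ⟨hP, h | h⟩
      · exact ⟨hP, Or.inl h⟩
      · exact ⟨hP, Or.inr ⟨Or.inr h, Or.inl rfl⟩⟩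
  rw [Nat.card_congr (Equiv.subtypeEquivRight hiff),
    card_split _ (fun e => G.tgt e.1 = G.src e0)]
  congr 1
  · apply Nat.card_congr; apply Equiv.subtypeEquivRight; intro e
    constructor
    · rintro ⟨⟨hP, _⟩, h⟩; exact ⟨hP, h⟩
    · rintro ⟨hP, h⟩; exact ⟨⟨hP, Or.inl h⟩, h⟩
  · apply Nat.card_congr; apply Equiv.subtypeEquivRight; intro e
    constructor
    · rintro ⟨⟨hP, h | h⟩, hn⟩
      · exact absurd h hn
      · exact ⟨hP, h⟩
    · rintro ⟨hP, h⟩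
      refine ⟨⟨hP, Or.inr h⟩, ?_⟩
      rw [h]
      exact fun hh => hne hh.symm

/-- dropping the `e ≠ e0` condition -/
lemma drop_ne (G : MDigraph) (e0 : G.E) (P : G.E → Prop)
    (Q : {e : G.E // e ≠ e0} → Prop) (hforce : ∀ e, P e → e ≠ e0)
    (hPQ : ∀ (e : G.E) (h : e ≠ e0), P e ↔ Q ⟨e, h⟩) :
    Nat.card {e : G.E // P e} = Nat.card {e : {e : G.E // e ≠ e0} // Q e} := by
  apply Nat.card_congr
  refine ⟨fun e => ⟨⟨e.1, hforce e.1 e.2⟩, (hPQ e.1 _).mp e.2⟩,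
    fun e => ⟨e.1.1, (hPQ e.1.1 e.1.2).mpr e.2⟩, fun e => rfl, fun e => rfl⟩

end MDigraph
namespace MDigraph

lemma isLinear_contractSet (G : MDigraph) (e0 : G.E) (hne : G.src e0 ≠ G.tgt e0)
    (h1 : G.degOut (G.src e0) = 1) {L : Set G.E} (hL : G.IsLinear L) :
    (G.contract e0).IsLinear (G.contractSet e0 L) := by
  show ∀ q : Quot (G.mergeRel e0),
    Nat.card {e : {e : G.E // e ≠ e0} //
        e.1 ∈ L ∧ Quot.mk (G.mergeRel e0) (G.src e.1) = q}
      = Nat.card {e : {e : G.E // e ≠ e0} //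
        e.1 ∈ L ∧ Quot.mk (G.mergeRel e0) (G.tgt e.1) = q}
    ∧ Nat.card {e : {e : G.E // e ≠ e0} //
        e.1 ∈ L ∧ Quot.mk (G.mergeRel e0) (G.src e.1) = q} ≤ 1
  intro q
  induction q using Quot.ind with
  | _ x =>
  by_cases hx : x = G.src e0 ∨ x = G.tgt e0
  · -- merged class
    have hq : Quot.mk (G.mergeRel e0) x = Quot.mk (G.mergeRel e0) (G.src e0) :=
      Quot.sound (Or.inr ⟨hx, Or.inl rfl⟩)
    rw [hq, src_u G e0 h1, tgt_u G e0 hne]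
    have A1 : Nat.card {e : G.E // e ∈ L ∧ G.src e = G.tgt e0}
        = Nat.card {e : {e : G.E // e ≠ e0} // e.1 ∈ L ∧ G.src e.1 = G.tgt e0} := by
      refine G.drop_ne e0 _ _ ?_ ?_
      · rintro e ⟨_, hs⟩ rfl; exact hne hs
      · intro e h; exact Iff.rfl
    have A2 : Nat.card {e : G.E // e ∈ L ∧ G.tgt e = G.src e0}
        = Nat.card {e : {e : G.E // e ≠ e0} // e.1 ∈ L ∧ G.tgt e.1 = G.src e0} := by
      refine G.drop_ne e0 _ _ ?_ ?_
      · rintro e ⟨_, ht⟩ rfl; exact hne ht.symm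
      · intro e h; exact Iff.rfl
    have A3 : Nat.card {e : G.E // e ∈ L ∧ G.tgt e = G.tgt e0}
        = Nat.card {e : G.E // (e ∈ L ∧ G.tgt e = G.tgt e0) ∧ e = e0}
          + Nat.card {e : G.E // (e ∈ L ∧ G.tgt e = G.tgt e0) ∧ ¬ e = e0} :=
      card_split _ _
    have A4 : Nat.card {e : G.E // (e ∈ L ∧ G.tgt e = G.tgt e0) ∧ e = e0}
        = Nat.card {e : G.E // e ∈ L ∧ G.src e = G.src e0} := by
      apply Nat.card_congr
      apply Equiv.subtypeEquivRight
      intro e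
      constructor
      · rintro ⟨⟨hm, _⟩, rfl⟩; exact ⟨hm, rfl⟩
      · rintro ⟨hm, hs⟩
        have he := G.forced_src e0 h1 e hs
        subst he
        exact ⟨⟨hm, rfl⟩, rfl⟩
    have A5 : Nat.card {e : G.E // (e ∈ L ∧ G.tgt e = G.tgt e0) ∧ ¬ e = e0}
        = Nat.card {e : {e : G.E // e ≠ e0} // e.1 ∈ L ∧ G.tgt e.1 = G.tgt e0} := by
      refine G.drop_ne e0 _ _ ?_ ?_
      · rintro e ⟨_, h⟩; exact h
      · intro e h
        constructor
        · rintro ⟨h', _⟩; exact h'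
        · rintro h'; exact ⟨h', h⟩
    have B1 := (hL (G.src e0)).1
    have B2 := (hL (G.tgt e0)).1
    have B3 := (hL (G.tgt e0)).2
    constructor
    · omega
    · omega
  · push_neg at hx
    rw [class_ne G e0 _ G.src x hx.1 hx.2, class_ne G e0 _ G.tgt x hx.1 hx.2]
    have hs' : Nat.card {e : G.E // e ∈ L ∧ G.src e = x}
        = Nat.card {e : {e : G.E // e ≠ e0} // e.1 ∈ L ∧ G.src e.1 = x} := by
      refine G.drop_ne e0 _ _ ?_ ?_
      · rintro e ⟨_, hs⟩ rfl; exact hx.1 hs.symm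
      · intro e h; exact Iff.rfl
    have ht' : Nat.card {e : G.E // e ∈ L ∧ G.tgt e = x}
        = Nat.card {e : {e : G.E // e ≠ e0} // e.1 ∈ L ∧ G.tgt e.1 = x} := by
      refine G.drop_ne e0 _ _ ?_ ?_
      · rintro e ⟨_, ht⟩ rfl; exact hx.2 ht.symm
      · intro e h; exact Iff.rfl
    rw [← hs', ← ht']
    exact hL x

end MDigraph
namespace MDigraph

lemma isLinear_expandSet (G : MDigraph) (e0 : G.E) (hne : G.src e0 ≠ G.tgt e0)
    (h1 : G.degOut (G.src e0) = 1) {L' : Set (G.contract e0).E}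
    (hL' : (G.contract e0).IsLinear L') : G.IsLinear (G.expandSet e0 L') := by
  classical
  -- key identities at the merged class
  have k1 : Nat.card {e : {e : G.E // e ≠ e0} //
        e ∈ L' ∧ Quot.mk (G.mergeRel e0) (G.src e.1) = Quot.mk (G.mergeRel e0) (G.src e0)}
      = Nat.card {e : {e : G.E // e ≠ e0} //
        e ∈ L' ∧ Quot.mk (G.mergeRel e0) (G.tgt e.1) = Quot.mk (G.mergeRel e0) (G.src e0)} :=
    (hL' (Quot.mk (G.mergeRel e0) (G.src e0))).1
  have k2 : Nat.card {e : {e : G.E // e ≠ e0} //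
        e ∈ L' ∧ Quot.mk (G.mergeRel e0) (G.src e.1) = Quot.mk (G.mergeRel e0) (G.src e0)} ≤ 1 :=
    (hL' (Quot.mk (G.mergeRel e0) (G.src e0))).2
  rw [src_u G e0 h1, tgt_u G e0 hne] at k1
  rw [src_u G e0 h1] at k2
  -- cs = cu + cv, cs ≤ 1
  have hMu : Nat.card {e : G.E // e ∈ G.expandSet e0 L' ∧ G.src e = G.src e0}
      = Nat.card {e : {e : G.E // e ≠ e0} // e ∈ L' ∧ G.tgt e.1 = G.src e0} := by
    by_cases hC : ∃ e' : {e : G.E // e ≠ e0}, e' ∈ L' ∧ G.tgt e'.1 = G.src e0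
    · have lhs1 : Nat.card {e : G.E // e ∈ G.expandSet e0 L' ∧ G.src e = G.src e0} = 1 := by
        rw [Nat.card_eq_one_iff_unique]
        constructor
        · constructor
          intro a b
          apply Subtype.ext
          rw [G.forced_src e0 h1 a.1 a.2.2, G.forced_src e0 h1 b.1 b.2.2]
        · exact ⟨⟨e0, (G.mem_expandSet_e0 e0 L').mpr hC, rfl⟩⟩
      have rhs1 : Nat.card {e : {e : G.E // e ≠ e0} // e ∈ L' ∧ G.tgt e.1 = G.src e0} = 1 := by
        haveI : Nonempty {e : {e : G.E // e ≠ e0} // e ∈ L' ∧ G.tgt e.1 = G.src e0} := by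
          obtain ⟨e', h⟩ := hC
          exact ⟨⟨e', h⟩⟩
        have hpos : 0 < Nat.card {e : {e : G.E // e ≠ e0} // e ∈ L' ∧ G.tgt e.1 = G.src e0} :=
          Nat.card_pos
        omega
      rw [lhs1, rhs1]
    · have lhs0 : Nat.card {e : G.E // e ∈ G.expandSet e0 L' ∧ G.src e = G.src e0} = 0 := by
        haveI : IsEmpty {e : G.E // e ∈ G.expandSet e0 L' ∧ G.src e = G.src e0} := by
          constructor
          rintro ⟨e, hm, hs⟩
          have he := G.forced_src e0 h1 e hs
          exact hC ((G.mem_expandSet_e0 e0 L').mp (he ▸ hm))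
        exact Nat.card_of_isEmpty
      have rhs0 : Nat.card {e : {e : G.E // e ≠ e0} // e ∈ L' ∧ G.tgt e.1 = G.src e0} = 0 := by
        haveI : IsEmpty {e : {e : G.E // e ≠ e0} // e ∈ L' ∧ G.tgt e.1 = G.src e0} := by
          constructor
          rintro ⟨e, hm, ht⟩
          exact hC ⟨e, hm, ht⟩
        exact Nat.card_of_isEmpty
      rw [lhs0, rhs0]
  intro x
  by_cases hxu : x = G.src e0
  · subst hxu
    -- at u : out-count = cu = in-count
    have hin : Nat.card {e : G.E // e ∈ G.expandSet e0 L' ∧ G.tgt e = G.src e0}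
        = Nat.card {e : {e : G.E // e ≠ e0} // e ∈ L' ∧ G.tgt e.1 = G.src e0} := by
      refine G.drop_ne e0 _ _ ?_ ?_
      · rintro e ⟨_, ht⟩ rfl; exact hne ht.symm
      · intro e h
        exact and_congr (G.mem_expandSet_ne e0 L' e h) Iff.rfl
    rw [hMu, hin]
    omega
  · by_cases hxv : x = G.tgt e0
    · subst hxv
      -- at v : out-count = cs, in-count = cu + cv = cs
      have hout : Nat.card {e : G.E // e ∈ G.expandSet e0 L' ∧ G.src e = G.tgt e0}
          = Nat.card {e : {e : G.E // e ≠ e0} // e ∈ L' ∧ G.src e.1 = G.tgt e0} := by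
        refine G.drop_ne e0 _ _ ?_ ?_
        · rintro e ⟨_, hs⟩ rfl; exact hne hs
        · intro e h
          exact and_congr (G.mem_expandSet_ne e0 L' e h) Iff.rfl
      have hsplit : Nat.card {e : G.E // e ∈ G.expandSet e0 L' ∧ G.tgt e = G.tgt e0}
          = Nat.card {e : G.E // (e ∈ G.expandSet e0 L' ∧ G.tgt e = G.tgt e0) ∧ e = e0}
            + Nat.card {e : G.E // (e ∈ G.expandSet e0 L' ∧ G.tgt e = G.tgt e0) ∧ ¬ e = e0} :=
        card_split _ _
      have hswap : Nat.card {e : G.E // (e ∈ G.expandSet e0 L' ∧ G.tgt e = G.tgt e0) ∧ e = e0}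
          = Nat.card {e : G.E // e ∈ G.expandSet e0 L' ∧ G.src e = G.src e0} := by
        apply Nat.card_congr
        apply Equiv.subtypeEquivRight
        intro e
        constructor
        · rintro ⟨⟨hm, _⟩, rfl⟩; exact ⟨hm, rfl⟩
        · rintro ⟨hm, hs⟩
          have he := G.forced_src e0 h1 e hs
          subst he
          exact ⟨⟨hm, rfl⟩, rfl⟩
      have hrest : Nat.card {e : G.E // (e ∈ G.expandSet e0 L' ∧ G.tgt e = G.tgt e0) ∧ ¬ e = e0}
          = Nat.card {e : {e : G.E // e ≠ e0} // e ∈ L' ∧ G.tgt e.1 = G.tgt e0} := by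
        refine G.drop_ne e0 _ _ ?_ ?_
        · rintro e ⟨_, h⟩; exact h
        · intro e h
          constructor
          · rintro ⟨⟨hm, ht⟩, _⟩
            exact ⟨(G.mem_expandSet_ne e0 L' e h).mp hm, ht⟩
          · rintro ⟨hm, ht⟩
            exact ⟨⟨(G.mem_expandSet_ne e0 L' e h).mpr hm, ht⟩, h⟩
      rw [hout, hsplit, hswap, hMu, hrest]
      omega
    · -- generic vertex
      have hsrc' : Nat.card {e : G.E // e ∈ G.expandSet e0 L' ∧ G.src e = x}
          = Nat.card {e : {e : G.E // e ≠ e0} // e ∈ L' ∧ G.src e.1 = x} := by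
        refine G.drop_ne e0 _ _ ?_ ?_
        · rintro e ⟨_, hs⟩ rfl; exact hxu hs.symm
        · intro e h
          exact and_congr (G.mem_expandSet_ne e0 L' e h) Iff.rfl
      have htgt' : Nat.card {e : G.E // e ∈ G.expandSet e0 L' ∧ G.tgt e = x}
          = Nat.card {e : {e : G.E // e ≠ e0} // e ∈ L' ∧ G.tgt e.1 = x} := by
        refine G.drop_ne e0 _ _ ?_ ?_
        · rintro e ⟨_, ht⟩ rfl; exact hxv ht.symm
        · intro e h
          exact and_congr (G.mem_expandSet_ne e0 L' e h) Iff.rfl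
      have j1 : Nat.card {e : {e : G.E // e ≠ e0} //
            e ∈ L' ∧ Quot.mk (G.mergeRel e0) (G.src e.1) = Quot.mk (G.mergeRel e0) x}
          = Nat.card {e : {e : G.E // e ≠ e0} //
            e ∈ L' ∧ Quot.mk (G.mergeRel e0) (G.tgt e.1) = Quot.mk (G.mergeRel e0) x} :=
        (hL' (Quot.mk (G.mergeRel e0) x)).1
      have j2 : Nat.card {e : {e : G.E // e ≠ e0} //
            e ∈ L' ∧ Quot.mk (G.mergeRel e0) (G.src e.1) = Quot.mk (G.mergeRel e0) x} ≤ 1 :=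
        (hL' (Quot.mk (G.mergeRel e0) x)).2
      rw [class_ne G e0 _ G.src x hxu hxv, class_ne G e0 _ G.tgt x hxu hxv] at j1
      rw [class_ne G e0 _ G.src x hxu hxv] at j2
      rw [hsrc', htgt']
      exact ⟨j1, j2⟩

end MDigraph
namespace MDigraph

lemma expand_contract (G : MDigraph) (e0 : G.E) (hne : G.src e0 ≠ G.tgt e0)
    (h1 : G.degOut (G.src e0) = 1) {L : Set G.E} (hL : G.IsLinear L) :
    G.expandSet e0 (G.contractSet e0 L) = L := by
  ext e
  by_cases h : e = e0
  · rw [h, G.mem_expandSet_e0]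
    constructor
    · rintro ⟨e', hm, ht⟩
      have hpos : 0 < Nat.card {e : G.E // e ∈ L ∧ G.tgt e = G.src e0} := by
        haveI : Nonempty {e : G.E // e ∈ L ∧ G.tgt e = G.src e0} := ⟨⟨e'.1, hm, ht⟩⟩
        exact Nat.card_pos
      have h2 := (hL (G.src e0)).1
      have hpos' : 0 < Nat.card {e : G.E // e ∈ L ∧ G.src e = G.src e0} := by omega
      obtain ⟨⟨e'', hm'', hs''⟩⟩ := (Nat.card_pos_iff.mp hpos').1
      have he'' := G.forced_src e0 h1 e'' hs''
      exact he'' ▸ hm''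
    · intro hm
      have hpos : 0 < Nat.card {e : G.E // e ∈ L ∧ G.src e = G.src e0} := by
        haveI : Nonempty {e : G.E // e ∈ L ∧ G.src e = G.src e0} := ⟨⟨e0, hm, rfl⟩⟩
        exact Nat.card_pos
      have h2 := (hL (G.src e0)).1
      have hpos' : 0 < Nat.card {e : G.E // e ∈ L ∧ G.tgt e = G.src e0} := by omega
      obtain ⟨⟨e'', hm'', ht''⟩⟩ := (Nat.card_pos_iff.mp hpos').1
      have hne'' : e'' ≠ e0 := by rintro rfl; exact hne ht''.symm
      exact ⟨⟨e'', hne''⟩, hm'', ht''⟩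
  · rw [G.mem_expandSet_ne e0 _ e h, G.mem_contractSet]

lemma contract_expand (G : MDigraph) (e0 : G.E) (L' : Set (G.contract e0).E) :
    G.contractSet e0 (G.expandSet e0 L') = L' := by
  ext e
  refine (G.mem_contractSet e0 _ e).trans ((G.mem_expandSet_ne e0 L' e.1 e.2).trans ?_)
  exact Iff.rfl

lemma contract_numLinear_of_degOut (G : MDigraph) (e0 : G.E) (hne : G.src e0 ≠ G.tgt e0)
    (h1 : G.degOut (G.src e0) = 1) : G.numLinear = (G.contract e0).numLinear := by
  apply Nat.card_congr
  exact ⟨fun L => ⟨G.contractSet e0 L.1, G.isLinear_contractSet e0 hne h1 L.2⟩,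
    fun L' => ⟨G.expandSet e0 L'.1, G.isLinear_expandSet e0 hne h1 L'.2⟩,
    fun L => Subtype.ext (G.expand_contract e0 hne h1 L.2),
    fun L' => Subtype.ext (G.contract_expand e0 L'.1)⟩

lemma contract_numLinear (G : MDigraph) (e0 : G.E) (hc : G.Contractible e0) :
    G.numLinear = (G.contract e0).numLinear := by
  obtain ⟨hne, h1 | h1⟩ := hc
  · exact G.contract_numLinear_of_degOut e0 hne h1
  · have h1' : G.rev.degOut (G.rev.src e0) = 1 := h1
    have hne' : G.rev.src e0 ≠ G.rev.tgt e0 := fun h => hne h.symm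
    calc G.numLinear = G.rev.numLinear := (rev_numLinear G).symm
      _ = (G.rev.contract e0).numLinear := G.rev.contract_numLinear_of_degOut e0 hne' h1'
      _ = ((G.contract e0).rev).numLinear := (revContractIso G e0).numLinear_eq
      _ = (G.contract e0).numLinear := rev_numLinear _

lemma contractStep_numLinear {G H : MDigraph} (h : ContractStep G H) :
    G.numLinear = H.numLinear := by
  obtain ⟨e0, hc, ⟨φ⟩⟩ := h
  exact (G.contract_numLinear e0 hc).trans φ.numLinear_eq

end MDigraph


/-- The number of linear subgraphs is invariant under contraction of
contractible edges, hence is a Weyl function. -/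
theorem numLinear_weyl_function :
    (∀ H H' : MDigraph, H.Semistable → MDigraph.ContractStep H H' →
      H.numLinear = H'.numLinear) ∧
    (∀ H₁ H₂ G : MDigraph, H₁.Semistable → H₂.Semistable →
      H₁.IsStabilization G → H₂.IsStabilization G → H₁.numLinear = H₂.numLinear) := by
  have key : ∀ {A B : MDigraph}, ReflTransGen MDigraph.ContractStep A B →
      A.numLinear = B.numLinear := by
    intro A B h
    induction h with
    | refl => rfl
    | tail _ hstep ih => exact ih.trans (MDigraph.contractStep_numLinear hstep)
  constructor
  · intro H H' _ h
    exact MDigraph.contractStep_numLinear h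
  · intro H₁ H₂ G _ _ h₁ h₂
    exact (key h₁.1).trans (key h₂.1).symm
end

section
/- Let Γ be a semistable pointed directed multigraph such that every edge of Γ is non-contractible and Γ is non-stabilizable. If v is an ordinary vertex with total degree 3 (strictly semistable), then v carries a self-loop. Consequently, if Γ is a non-stabilizable semistable pointed graph then det(I − A(Γ₋)) = 0, where Γ₋ is Γ with the distinguished vertex removed. -/
open Relation

/-- A pointed finite directed multigraph: a digraph with a distinguished vertex. -/
structure PGraph where
  V : Type
  E : Type
  [hV : Finite V]
  [hE : Finite E]
  src : E → V
  tgt : E → V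
  base : V

attribute [instance] PGraph.hV PGraph.hE

namespace PGraph

noncomputable def degOut (G : PGraph) (v : G.V) : ℕ := Nat.card {e : G.E // G.src e = v}
noncomputable def degIn (G : PGraph) (v : G.V) : ℕ := Nat.card {e : G.E // G.tgt e = v}

/-- Semistability, required only of ordinary (non-distinguished) vertices. -/
def Semistable (G : PGraph) : Prop :=
  ∀ v : G.V, v ≠ G.base → 1 ≤ G.degIn v ∧ 1 ≤ G.degOut v ∧ 3 ≤ G.degIn v + G.degOut v

/-- Stability, required only of ordinary vertices. -/
def Stable (G : PGraph) : Prop :=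
  ∀ v : G.V, v ≠ G.base → 2 ≤ G.degIn v ∧ 2 ≤ G.degOut v

/-- An edge `uv` is contractible if `u ≠ v` and either `u` is ordinary with out-degree 1,
or `v` is ordinary with in-degree 1. -/
def Contractible (G : PGraph) (e : G.E) : Prop :=
  G.src e ≠ G.tgt e ∧
    ((G.src e ≠ G.base ∧ G.degOut (G.src e) = 1) ∨
     (G.tgt e ≠ G.base ∧ G.degIn (G.tgt e) = 1))

def mergeRel (G : PGraph) (e0 : G.E) (a b : G.V) : Prop :=
  a = b ∨ ((a = G.src e0 ∨ a = G.tgt e0) ∧ (b = G.src e0 ∨ b = G.tgt e0))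

/-- Contract the edge `e0`, merging its two endpoints. -/
def contract (G : PGraph) (e0 : G.E) : PGraph where
  V := Quot (G.mergeRel e0)
  E := {e : G.E // e ≠ e0}
  src e := Quot.mk _ (G.src e.1)
  tgt e := Quot.mk _ (G.tgt e.1)
  base := Quot.mk _ G.base

/-- Isomorphism of pointed graphs. -/
structure Iso (G H : PGraph) where
  vEquiv : G.V ≃ H.V
  eEquiv : G.E ≃ H.E
  src_map : ∀ e, H.src (eEquiv e) = vEquiv (G.src e)
  tgt_map : ∀ e, H.tgt (eEquiv e) = vEquiv (G.tgt e)
  base_map : vEquiv G.base = H.base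

def Adj (G : PGraph) (a b : G.V) : Prop := ∃ e, G.src e = a ∧ G.tgt e = b

def Strong (G : PGraph) : Prop := ∀ a b : G.V, ReflTransGen G.Adj a b

def ContractStep (G H : PGraph) : Prop :=
  ∃ e0 : G.E, G.Contractible e0 ∧ Nonempty (Iso (G.contract e0) H)

def IsStabilization (G H : PGraph) : Prop :=
  ReflTransGen ContractStep G H ∧ H.Stable

def Stabilizable (G : PGraph) : Prop := ∃ H, G.IsStabilization H

open Classical in
/-- The determinant det(I − A(Γ₋)), where Γ₋ is the graph on the ordinary vertices. -/
noncomputable def detIAminus (G : PGraph) : ℤ :=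
  letI := Fintype.ofFinite {v : G.V // v ≠ G.base}
  ((1 : Matrix {v : G.V // v ≠ G.base} {v : G.V // v ≠ G.base} ℤ) -
    Matrix.of fun a b : {v : G.V // v ≠ G.base} =>
      (Nat.card {e : G.E // G.src e = a.1 ∧ G.tgt e = b.1} : ℤ)).det

end PGraph


section Helpers

open Matrix

variable {α : Type} [Finite α]

lemma card_or {P Q : α → Prop} (h : ∀ a, P a → Q a → False) :
    Nat.card {a // P a ∨ Q a} = Nat.card {a // P a} + Nat.card {a // Q a} := by
  classical
  haveI : Finite {a // P a} := Subtype.finite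
  haveI : Finite {a // Q a} := Subtype.finite
  rw [Nat.card_congr (subtypeOrEquiv P Q
    (fun x hx hq a ha => (h a (hx a ha) (hq a ha)).elim)), Nat.card_sum]

lemma card_sub (e0 : α) (P : {a // a ≠ e0} → Prop) (Q : α → Prop)
    (h1 : ∀ x : {a // a ≠ e0}, P x ↔ Q x.1) (h2 : ∀ a, Q a → a ≠ e0) :
    Nat.card {x : {a // a ≠ e0} // P x} = Nat.card {a // Q a} :=
  Nat.card_congr ⟨fun x => ⟨x.1.1, (h1 x.1).mp x.2⟩, fun y => ⟨⟨y.1, h2 _ y.2⟩, (h1 _).mpr y.2⟩,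
    fun x => Subtype.ext (Subtype.ext rfl), fun y => rfl⟩

lemma card_empty_prop {P : α → Prop} (h : ∀ a, ¬ P a) : Nat.card {a // P a} = 0 := by
  haveI : IsEmpty {a // P a} := ⟨fun x => h x.1 x.2⟩
  exact Nat.card_of_isEmpty

lemma det_minor_of_row {ι : Type} [Fintype ι] [DecidableEq ι] (M : Matrix ι ι ℤ) (i : ι)
    (h : ∀ j, M i j = if j = i then 1 else 0) :
    M.det = (M.submatrix (Subtype.val : {j // j ≠ i} → ι) Subtype.val).det := by
  classical
  have hU : ∀ x : {j : ι // ¬ j ≠ i}, x.1 = i := fun x => not_not.mp x.2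
  haveI : Unique {j : ι // ¬ j ≠ i} :=
    ⟨⟨⟨i, not_not_intro rfl⟩⟩, fun x => Subtype.ext (hU x)⟩
  let e : ({j : ι // j ≠ i} ⊕ {j : ι // ¬ j ≠ i}) ≃ ι := Equiv.sumCompl _
  rw [← Matrix.det_submatrix_equiv_self e M]
  have h21 : (M.submatrix e e).toBlocks₂₁ = 0 := by
    ext a b
    have ha : (e (Sum.inr a)) = i := hU a
    simp only [Matrix.toBlocks₂₁, Matrix.submatrix_apply, Matrix.of_apply, ha, h,
      Matrix.zero_apply]
    have : (e (Sum.inl b)) = b.1 := rfl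
    rw [this, if_neg b.2]
  rw [← Matrix.fromBlocks_toBlocks (M.submatrix e e), h21, Matrix.det_fromBlocks_zero₂₁]
  have h22 : ((M.submatrix e e).toBlocks₂₂).det = 1 := by
    rw [Matrix.det_unique]
    have ha : (e (Sum.inr (default : {j : ι // ¬ j ≠ i}))) = i := hU _
    simp only [Matrix.toBlocks₂₂, Matrix.submatrix_apply, Matrix.of_apply, ha, h, if_pos rfl]
    exact if_pos trivial
  rw [h22, mul_one]
  congr 1

lemma det_minor_of_col {ι : Type} [Fintype ι] [DecidableEq ι] (M : Matrix ι ι ℤ) (i : ι)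
    (h : ∀ j, M j i = if j = i then 1 else 0) :
    M.det = (M.submatrix (Subtype.val : {j // j ≠ i} → ι) Subtype.val).det := by
  rw [← Matrix.det_transpose M, det_minor_of_row Mᵀ i (fun j => h j), ← Matrix.det_transpose]
  congr 1

end Helpers

namespace PGraph

variable {G : PGraph}

/-- The reversed graph. -/
def rev (G : PGraph) : PGraph where
  V := G.V
  E := G.E
  src := G.tgt
  tgt := G.src
  base := G.base

lemma rev_mergeRel (e0 : G.E) : G.rev.mergeRel e0 = G.mergeRel e0 := by
  funext a b
  exact propext (or_congr_right (and_congr or_comm or_comm))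

lemma rev_contract (e0 : G.E) : G.rev.contract e0 = (G.contract e0).rev := by
  show PGraph.mk (Quot (G.rev.mergeRel e0)) _ _ _ _ = _
  rw [rev_mergeRel]
  rfl

lemma mergeRel_equiv (e0 : G.E) : Equivalence (G.mergeRel e0) := by
  constructor
  · exact fun a => Or.inl rfl
  · rintro a b (rfl | ⟨h1, h2⟩)
    · exact Or.inl rfl
    · exact Or.inr ⟨h2, h1⟩
  · rintro a b c (rfl | ⟨h1, h2⟩) h
    · exact h
    · rcases h with rfl | ⟨h3, h4⟩
      · exact Or.inr ⟨h1, h2⟩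
      · exact Or.inr ⟨h1, h4⟩

lemma quot_mk_eq_iff (e0 : G.E) (a b : G.V) :
    Quot.mk (G.mergeRel e0) a = Quot.mk (G.mergeRel e0) b ↔ G.mergeRel e0 a b := by
  rw [Quot.eq]
  exact (mergeRel_equiv e0).eqvGen_iff

lemma degIn_pos_iff {v : G.V} : 1 ≤ G.degIn v ↔ ∃ e, G.tgt e = v := by
  rw [degIn, Nat.succ_le_iff, Nat.card_pos_iff, nonempty_subtype]
  exact ⟨fun h => h.1, fun h => ⟨h, Subtype.finite⟩⟩

lemma degOut_pos_iff {v : G.V} : 1 ≤ G.degOut v ↔ ∃ e, G.src e = v := by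
  rw [degOut, Nat.succ_le_iff, Nat.card_pos_iff, nonempty_subtype]
  exact ⟨fun h => h.1, fun h => ⟨h, Subtype.finite⟩⟩

lemma out_unique {e0 : G.E} (h1 : G.degOut (G.src e0) = 1) :
    ∀ e, G.src e = G.src e0 → e = e0 := by
  intro e he
  have := (Nat.card_eq_one_iff_unique.mp h1).1
  have h2 : (⟨e, he⟩ : {e : G.E // G.src e = G.src e0}) = ⟨e0, rfl⟩ := Subsingleton.elim _ _
  exact congrArg Subtype.val h2

lemma in_unique {e0 : G.E} (h1 : G.degIn (G.tgt e0) = 1) :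
    ∀ e, G.tgt e = G.tgt e0 → e = e0 := by
  intro e he
  have := (Nat.card_eq_one_iff_unique.mp h1).1
  have h2 : (⟨e, he⟩ : {e : G.E // G.tgt e = G.tgt e0}) = ⟨e0, rfl⟩ := Subsingleton.elim _ _
  exact congrArg Subtype.val h2

/-- weak semistability invariant -/
def Wk (G : PGraph) : Prop :=
  ∀ v : G.V, v ≠ G.base → (∃ e, G.tgt e = v) ∧ (∃ e, G.src e = v)

lemma Wk.of_semistable (h : G.Semistable) : G.Wk := fun v hv =>
  ⟨degIn_pos_iff.mp (h v hv).1, degOut_pos_iff.mp (h v hv).2.1⟩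

lemma Wk.contract (hW : G.Wk) {e0 : G.E} (hc : G.Contractible e0) : (G.contract e0).Wk := by
  obtain ⟨hne, -⟩ := hc
  intro c hcb
  induction c using Quot.ind with | _ a =>
  by_cases ha : a = G.src e0 ∨ a = G.tgt e0
  · have hP : ∀ x : G.V, (x = G.src e0 ∨ x = G.tgt e0) → x ≠ G.base := by
      intro x hx h
      exact hcb ((quot_mk_eq_iff e0 a G.base).mpr (Or.inr ⟨ha, h ▸ hx⟩))
    obtain ⟨eIn, heIn⟩ := (hW _ (hP _ (Or.inl rfl))).1
    obtain ⟨eOut, heOut⟩ := (hW _ (hP _ (Or.inr rfl))).2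
    constructor
    · refine ⟨⟨eIn, fun h => hne ?_⟩, ?_⟩
      · rw [← heIn, h]
      · show Quot.mk _ (G.tgt eIn) = Quot.mk _ a
        exact (quot_mk_eq_iff e0 _ _).mpr (Or.inr ⟨Or.inl heIn, ha⟩)
    · refine ⟨⟨eOut, fun h => hne ?_⟩, ?_⟩
      · rw [h] at heOut; exact heOut
      · show Quot.mk _ (G.src eOut) = Quot.mk _ a
        exact (quot_mk_eq_iff e0 _ _).mpr (Or.inr ⟨Or.inr heOut, ha⟩)
  · have hab : a ≠ G.base := fun h => hcb (by rw [h]; rfl)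
    obtain ⟨⟨eIn, heIn⟩, ⟨eOut, heOut⟩⟩ := hW a hab
    constructor
    · refine ⟨⟨eIn, fun h => ha ?_⟩, ?_⟩
      · rw [← heIn, h]; exact Or.inr rfl
      · show Quot.mk _ (G.tgt eIn) = Quot.mk _ a
        rw [heIn]
    · refine ⟨⟨eOut, fun h => ha ?_⟩, ?_⟩
      · rw [← heOut, h]; exact Or.inl rfl
      · show Quot.mk _ (G.src eOut) = Quot.mk _ a
        rw [heOut]

/-- identity isomorphism -/
def Iso.refl (G : PGraph) : Iso G G :=
  ⟨Equiv.refl _, Equiv.refl _, fun _ => rfl, fun _ => rfl, rfl⟩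

lemma not_stabilizable_contract {e0 : G.E} (hc : G.Contractible e0)
    (h : ¬ G.Stabilizable) : ¬ (G.contract e0).Stabilizable := by
  rintro ⟨H, hpath, hst⟩
  exact h ⟨H, Relation.ReflTransGen.head ⟨e0, hc, ⟨Iso.refl _⟩⟩ hpath, hst⟩

end PGraph

namespace PGraph

variable {G : PGraph}

open Classical in
noncomputable def matM (G : PGraph) :
    Matrix {v : G.V // v ≠ G.base} {v : G.V // v ≠ G.base} ℤ :=
  (1 : Matrix _ _ ℤ) - Matrix.of fun a b : {v : G.V // v ≠ G.base} =>
    (Nat.card {e : G.E // G.src e = a.1 ∧ G.tgt e = b.1} : ℤ)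

open Classical in
lemma detIAminus_def (G : PGraph) [inst : Fintype {v : G.V // v ≠ G.base}] :
    G.detIAminus = (matM G).det := by
  rw [detIAminus, matM]
  congr!

open Classical in
lemma matM_apply (G : PGraph) (a b : {v : G.V // v ≠ G.base}) :
    matM G a b = (if a.1 = b.1 then 1 else 0)
      - (Nat.card {e : G.E // G.src e = a.1 ∧ G.tgt e = b.1} : ℤ) := by
  rw [matM]
  by_cases h : a = b
  · subst h
    rw [Matrix.sub_apply, Matrix.one_apply_eq, Matrix.of_apply, if_pos rfl]
  · rw [Matrix.sub_apply, Matrix.one_apply_ne h, Matrix.of_apply,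
      if_neg (fun hh => h (Subtype.ext hh))]

open Matrix in
open Classical in
lemma detIAminus_rev (G : PGraph) : G.rev.detIAminus = G.detIAminus := by
  cases nonempty_fintype {v : G.V // v ≠ G.base}
  haveI : Fintype {v : G.rev.V // v ≠ G.rev.base} := by assumption
  rw [detIAminus_def (G := G.rev), detIAminus_def (G := G)]
  let ψ : {v : G.V // v ≠ G.base} ≃ {v : G.rev.V // v ≠ G.rev.base} :=
    ⟨fun x => ⟨x.1, x.2⟩, fun x => ⟨x.1, x.2⟩, fun _ => rfl, fun _ => rfl⟩
  rw [← Matrix.det_submatrix_equiv_self ψ (matM G.rev), ← Matrix.det_transpose (matM G)]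
  congr 1
  ext a b
  rw [Matrix.transpose_apply, Matrix.submatrix_apply, matM_apply, matM_apply]
  have hψ : ∀ x : {v : G.V // v ≠ G.base}, ((ψ x).1 : G.V) = x.1 := fun _ => rfl
  congr 1
  · by_cases h : (a.1 : G.V) = b.1
    · rw [if_pos, if_pos] <;> simp [hψ, h] <;> exact rfl
    · rw [if_neg (fun hh : ((ψ a).1 : G.V) = (ψ b).1 => h hh), if_neg (fun hh => h hh.symm)]
  · congr 1
    exact Nat.card_congr (Equiv.subtypeEquivRight (fun e => by
      constructor
      · rintro ⟨h1, h2⟩; exact ⟨h2, h1⟩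
      · rintro ⟨h1, h2⟩; exact ⟨h2, h1⟩))

lemma rev_degOut (v : G.V) : G.rev.degOut v = G.degIn v := rfl
lemma rev_degIn (v : G.V) : G.rev.degIn v = G.degOut v := rfl

lemma rev_contractible (e0 : G.E) : G.rev.Contractible e0 ↔ G.Contractible e0 := by
  constructor <;> rintro ⟨h1, h2 | h2⟩
  · exact ⟨fun h => h1 h.symm, Or.inr h2⟩
  · exact ⟨fun h => h1 h.symm, Or.inl h2⟩
  · exact ⟨fun h => h1 h.symm, Or.inr h2⟩
  · exact ⟨fun h => h1 h.symm, Or.inl h2⟩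

open Classical in
lemma det_zero_of_no_contractible (hW : G.Wk) (hnc : ∀ e, ¬ G.Contractible e)
    (hns : ¬ G.Stable) : G.detIAminus = 0 := by
  cases nonempty_fintype {v : G.V // v ≠ G.base}
  rw [detIAminus_def]
  rw [Stable] at hns; push_neg at hns
  obtain ⟨v, hv, hdeg⟩ := hns
  obtain ⟨hin, hout⟩ := hW v hv
  have hi1 : 1 ≤ G.degIn v := degIn_pos_iff.mpr hin
  have ho1 : 1 ≤ G.degOut v := degOut_pos_iff.mpr hout
  rcases (show G.degIn v = 1 ∨ G.degOut v = 1 by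
    by_cases h2 : 2 ≤ G.degIn v
    · exact Or.inr (by have := hdeg h2; omega)
    · exact Or.inl (by omega)) with hd | hd
  · -- in-degree one: column v of the matrix vanishes
    have hsrc : ∀ e, G.tgt e = v → G.src e = v := by
      intro e he
      by_contra hne
      exact hnc e ⟨fun hh => hne (hh.trans he), Or.inr ⟨he.symm ▸ hv, by rw [he]; exact hd⟩⟩
    apply Matrix.det_eq_zero_of_column_eq_zero ⟨v, hv⟩
    intro a
    rw [matM_apply]
    by_cases hav : (a.1 : G.V) = v
    · rw [if_pos hav]
      have hc1 : Nat.card {e : G.E // G.src e = a.1 ∧ G.tgt e = v} = 1 := by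
        rw [← hd, degIn]
        apply Nat.card_congr (Equiv.subtypeEquivRight _)
        intro e; constructor
        · rintro ⟨-, h2⟩; exact h2
        · intro h2; exact ⟨by rw [hsrc e h2, hav], h2⟩
      rw [hc1]; norm_num
    · rw [if_neg hav]
      have hc0 : Nat.card {e : G.E // G.src e = a.1 ∧ G.tgt e = v} = 0 :=
        card_empty_prop (fun e h => hav (by rw [← h.1, hsrc e h.2]))
      rw [hc0]; norm_num
  · -- out-degree one: row v of the matrix vanishes
    have htgt : ∀ e, G.src e = v → G.tgt e = v := by
      intro e he
      by_contra hne
      exact hnc e ⟨fun hh => hne (he.symm.trans hh).symm,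
        Or.inl ⟨he.symm ▸ hv, by rw [he]; exact hd⟩⟩
    apply Matrix.det_eq_zero_of_row_eq_zero ⟨v, hv⟩
    intro a
    rw [matM_apply]
    by_cases hav : v = (a.1 : G.V)
    · rw [if_pos hav]
      have hc1 : Nat.card {e : G.E // G.src e = v ∧ G.tgt e = a.1} = 1 := by
        rw [← hd, degOut]
        apply Nat.card_congr (Equiv.subtypeEquivRight _)
        intro e; constructor
        · rintro ⟨h2, -⟩; exact h2
        · intro h2; exact ⟨h2, by rw [htgt e h2, ← hav]⟩
      rw [hc1]; norm_num
    · rw [if_neg hav]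
      have hc0 : Nat.card {e : G.E // G.src e = v ∧ G.tgt e = a.1} = 0 :=
        card_empty_prop (fun e h => hav (by rw [← h.2, htgt e h.1]))
      rw [hc0]; norm_num

open Classical in
lemma card_contract_entry {e0 : G.E} (hne : G.src e0 ≠ G.tgt e0)
    (h1 : G.degOut (G.src e0) = 1) {a b : G.V}
    (hau : a ≠ G.src e0) (hbu : b ≠ G.src e0) :
    Nat.card {e : (G.contract e0).E // (G.contract e0).src e = Quot.mk (G.mergeRel e0) a ∧
        (G.contract e0).tgt e = Quot.mk (G.mergeRel e0) b}
      = if b = G.tgt e0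
        then Nat.card {e : G.E // G.src e = a ∧ G.tgt e = G.src e0}
           + Nat.card {e : G.E // G.src e = a ∧ G.tgt e = G.tgt e0}
        else Nat.card {e : G.E // G.src e = a ∧ G.tgt e = b} := by
  show Nat.card {x : {e : G.E // e ≠ e0} //
      Quot.mk (G.mergeRel e0) (G.src x.1) = Quot.mk (G.mergeRel e0) a ∧
      Quot.mk (G.mergeRel e0) (G.tgt x.1) = Quot.mk (G.mergeRel e0) b} = _
  have huniq := out_unique h1
  have srcIff : ∀ e : G.E, e ≠ e0 → (G.mergeRel e0 (G.src e) a ↔ G.src e = a) := by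
    intro e he
    constructor
    · rintro (h | ⟨hs, ha'⟩)
      · exact h
      · rcases ha' with ha' | ha'
        · exact absurd ha' hau
        · rcases hs with hs | hs
          · exact absurd (huniq e hs) he
          · rw [hs, ha']
    · exact fun h => Or.inl h
  by_cases hbw : b = G.tgt e0
  · rw [if_pos hbw]
    rw [card_sub e0 _ (fun e => G.src e = a ∧ (G.tgt e = G.src e0 ∨ G.tgt e = G.tgt e0))
      ?_ ?_]
    · rw [Nat.card_congr (Equiv.subtypeEquivRight
        (fun e => and_or_left (a := G.src e = a)
          (b := G.tgt e = G.src e0) (c := G.tgt e = G.tgt e0))), card_or]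
      rintro e ⟨-, h2⟩ ⟨-, h3⟩
      exact hne (h2.symm.trans h3)
    · intro x
      constructor
      · rintro ⟨hs, ht⟩
        rw [quot_mk_eq_iff] at hs ht
        refine ⟨(srcIff x.1 x.2).mp hs, ?_⟩
        rcases ht with h | ⟨ht', -⟩
        · exact Or.inr (h.trans hbw)
        · exact ht'
      · rintro ⟨hs, ht⟩
        constructor
        · rw [quot_mk_eq_iff]; exact Or.inl hs
        · rw [quot_mk_eq_iff]
          exact Or.inr ⟨ht, Or.inr hbw⟩
    · intro e he h0
      exact hau (by rw [← he.1, h0])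
  · rw [if_neg hbw]
    rw [card_sub e0 _ (fun e => G.src e = a ∧ G.tgt e = b) ?_ ?_]
    · intro x
      constructor
      · rintro ⟨hs, ht⟩
        rw [quot_mk_eq_iff] at hs ht
        refine ⟨(srcIff x.1 x.2).mp hs, ?_⟩
        rcases ht with h | ⟨-, hb'⟩
        · exact h
        · rcases hb' with hb' | hb'
          · exact absurd hb' hbu
          · exact absurd hb' hbw
      · rintro ⟨hs, ht⟩
        exact ⟨by rw [quot_mk_eq_iff]; exact Or.inl hs,
          by rw [quot_mk_eq_iff]; exact Or.inl ht⟩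
    · intro e he h0
      exact hbw (by rw [← he.2, h0])

open Classical in
lemma det_contract_A {e0 : G.E} (hne : G.src e0 ≠ G.tgt e0) (hub : G.src e0 ≠ G.base)
    (h1 : G.degOut (G.src e0) = 1) :
    (G.contract e0).detIAminus = G.detIAminus := by
  have huniq := out_unique h1
  cases nonempty_fintype {v : G.V // v ≠ G.base}
  haveI : Fintype {c : (G.contract e0).V // c ≠ (G.contract e0).base} := Fintype.ofFinite _
  have hKb : ∀ x : {j : {v : G.V // v ≠ G.base} // j ≠ ⟨G.src e0, hub⟩},
      (Quot.mk (G.mergeRel e0) x.1.1 ≠ (G.contract e0).base) := by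
    intro x h
    rw [show (G.contract e0).base = Quot.mk (G.mergeRel e0) G.base from rfl,
      quot_mk_eq_iff] at h
    rcases h with h | ⟨hx, hb⟩
    · exact x.1.2 h
    · rcases hb with hb | hb
      · exact hub hb.symm
      · rcases hx with hx | hx
        · exact x.2 (Subtype.ext hx)
        · exact x.1.2 (hx.trans hb.symm)
  let f : {j : {v : G.V // v ≠ G.base} // j ≠ ⟨G.src e0, hub⟩} →
      {c : (G.contract e0).V // c ≠ (G.contract e0).base} :=
    fun x => ⟨Quot.mk (G.mergeRel e0) x.1.1, hKb x⟩
  have hinj : Function.Injective f := by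
    intro x y h
    have h' : Quot.mk (G.mergeRel e0) x.1.1 = Quot.mk (G.mergeRel e0) y.1.1 :=
      congrArg Subtype.val h
    rw [quot_mk_eq_iff] at h'
    rcases h' with h' | ⟨hx, hy⟩
    · exact Subtype.ext (Subtype.ext h')
    · have hx' : x.1.1 = G.tgt e0 := by
        rcases hx with h'' | h''
        · exact absurd (Subtype.ext h'') x.2
        · exact h''
      have hy' : y.1.1 = G.tgt e0 := by
        rcases hy with h'' | h''
        · exact absurd (Subtype.ext h'') y.2
        · exact h''
      exact Subtype.ext (Subtype.ext (hx'.trans hy'.symm))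
  have hsurj : Function.Surjective f := by
    rintro ⟨c, hc⟩
    obtain ⟨a, ha⟩ := Quot.exists_rep c
    by_cases haP : a = G.src e0 ∨ a = G.tgt e0
    · have hwB : G.tgt e0 ≠ G.base := by
        intro hwb
        apply hc
        rw [← ha, show (G.contract e0).base = Quot.mk (G.mergeRel e0) G.base from rfl]
        exact (quot_mk_eq_iff e0 _ _).mpr (Or.inr ⟨haP, Or.inr hwb.symm⟩)
      refine ⟨⟨⟨G.tgt e0, hwB⟩, fun h => hne (congrArg Subtype.val h).symm⟩, ?_⟩
      apply Subtype.ext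
      show Quot.mk (G.mergeRel e0) (G.tgt e0) = c
      rw [← ha]
      exact Quot.sound (Or.inr ⟨Or.inr rfl, haP⟩)
    · push_neg at haP
      have hab : a ≠ G.base := by
        intro h; apply hc; rw [← ha, h]; rfl
      exact ⟨⟨⟨a, hab⟩, fun h => haP.1 (congrArg Subtype.val h)⟩, Subtype.ext ha⟩
  let φ := Equiv.ofBijective f ⟨hinj, hsurj⟩
  rw [detIAminus_def, detIAminus_def (G := G),
    ← Matrix.det_submatrix_equiv_self φ (matM (G.contract e0))]
  have hentry : ∀ x y : {j : {v : G.V // v ≠ G.base} // j ≠ ⟨G.src e0, hub⟩},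
      (matM (G.contract e0)).submatrix φ φ x y
        = (if x.1.1 = y.1.1 then 1 else 0)
          - (((if y.1.1 = G.tgt e0
              then Nat.card {e : G.E // G.src e = x.1.1 ∧ G.tgt e = G.src e0}
                + Nat.card {e : G.E // G.src e = x.1.1 ∧ G.tgt e = G.tgt e0}
              else Nat.card {e : G.E // G.src e = x.1.1 ∧ G.tgt e = y.1.1}) : ℕ) : ℤ) := by
    intro x y
    rw [Matrix.submatrix_apply, matM_apply]
    congr 1
    · by_cases h : x.1.1 = y.1.1
      · have hxy : x = y := Subtype.ext (Subtype.ext h)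
        subst hxy
        rw [if_pos rfl, if_pos rfl]
      · rw [if_neg (fun hh : (φ x).1 = (φ y).1 =>
          h (congrArg (fun z => z.1.1) (φ.injective (Subtype.ext hh)))), if_neg h]
    · exact congrArg Nat.cast (card_contract_entry hne h1
        (fun h => x.2 (Subtype.ext h)) (fun h => y.2 (Subtype.ext h)))
  by_cases hwB : G.tgt e0 = G.base
  · -- the merged vertex is the base vertex
    have hrow : ∀ j, matM G ⟨G.src e0, hub⟩ j = if j = ⟨G.src e0, hub⟩ then 1 else 0 := by
      intro j
      rw [matM_apply]
      have h0 : Nat.card {e : G.E // G.src e = (⟨G.src e0, hub⟩ :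
          {v : G.V // v ≠ G.base}).1 ∧ G.tgt e = j.1} = 0 := by
        apply card_empty_prop
        rintro e ⟨hs, ht⟩
        have : j.1 = G.base := by rw [← ht, huniq e hs, hwB]
        exact j.2 this
      rw [h0]
      by_cases h : j = ⟨G.src e0, hub⟩
      · subst h; rw [if_pos rfl, if_pos rfl]; norm_num
      · rw [if_neg (fun hh => h (Subtype.ext hh.symm)), if_neg h]; norm_num
    rw [det_minor_of_row (matM G) _ hrow]
    congr 1
    ext x y
    rw [hentry x y, Matrix.submatrix_apply, matM_apply]
    have hyw : y.1.1 ≠ G.tgt e0 := fun h => y.1.2 (h.trans hwB)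
    rw [if_neg hyw]
  · -- the merged vertex is an ordinary vertex
    have hNu : ∀ j : {v : G.V // v ≠ G.base}, j ≠ ⟨G.tgt e0, hwB⟩ →
        Nat.card {e : G.E // G.src e = G.src e0 ∧ G.tgt e = j.1} = 0 := by
      intro j hj
      apply card_empty_prop
      rintro e ⟨hs, ht⟩
      exact hj (Subtype.ext (by rw [← ht, huniq e hs]))
    have hNw : Nat.card {e : G.E // G.src e = G.src e0 ∧ G.tgt e = G.tgt e0} = 1 := by
      rw [Nat.card_eq_one_iff_unique]
      exact ⟨⟨fun p q => Subtype.ext ((huniq p.1 p.2.1).trans (huniq q.1 q.2.1).symm)⟩,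
        ⟨⟨e0, rfl, rfl⟩⟩⟩
    have hwu : (⟨G.tgt e0, hwB⟩ : {v : G.V // v ≠ G.base}) ≠ ⟨G.src e0, hub⟩ :=
      fun h => hne (congrArg Subtype.val h).symm
    rw [show (matM G).det = ((matM G).updateCol ⟨G.tgt e0, hwB⟩
        (fun k => matM G k ⟨G.tgt e0, hwB⟩ + matM G k ⟨G.src e0, hub⟩)).det from
      (Matrix.det_updateCol_add_self (matM G) hwu).symm]
    have hrow : ∀ j, ((matM G).updateCol ⟨G.tgt e0, hwB⟩
        (fun k => matM G k ⟨G.tgt e0, hwB⟩ + matM G k ⟨G.src e0, hub⟩)) ⟨G.src e0, hub⟩ j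
        = if j = ⟨G.src e0, hub⟩ then 1 else 0 := by
      intro j
      rw [Matrix.updateCol_apply]
      by_cases hj : j = ⟨G.tgt e0, hwB⟩
      · rw [if_pos hj, matM_apply, matM_apply]
        have e1 : Nat.card {e : G.E // G.src e = (⟨G.src e0, hub⟩ :
            {v : G.V // v ≠ G.base}).1 ∧ G.tgt e = (⟨G.tgt e0, hwB⟩ :
            {v : G.V // v ≠ G.base}).1} = 1 := hNw
        have e2 : Nat.card {e : G.E // G.src e = (⟨G.src e0, hub⟩ :
            {v : G.V // v ≠ G.base}).1 ∧ G.tgt e = (⟨G.src e0, hub⟩ :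
            {v : G.V // v ≠ G.base}).1} = 0 := hNu _ hwu.symm
        rw [e1, e2, if_neg (show G.src e0 ≠ G.tgt e0 from hne), if_pos rfl,
          if_neg (show j ≠ ⟨G.src e0, hub⟩ from hj ▸ hwu)]
        norm_num
      · rw [if_neg hj, matM_apply]
        have e2 : Nat.card {e : G.E // G.src e = (⟨G.src e0, hub⟩ :
            {v : G.V // v ≠ G.base}).1 ∧ G.tgt e = j.1} = 0 := hNu _ hj
        rw [e2]
        by_cases h : j = ⟨G.src e0, hub⟩
        · subst h; rw [if_pos rfl, if_pos rfl]; norm_num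
        · rw [if_neg (fun hh => h (Subtype.ext hh.symm)), if_neg h]; norm_num
    rw [det_minor_of_row _ _ hrow]
    congr 1
    ext x y
    rw [hentry x y, Matrix.submatrix_apply, Matrix.updateCol_apply]
    by_cases hyw : y.1 = ⟨G.tgt e0, hwB⟩
    · have hyw' : y.1.1 = G.tgt e0 := congrArg Subtype.val hyw
      rw [if_pos hyw, if_pos hyw', matM_apply, matM_apply]
      have hxu : x.1.1 ≠ (⟨G.src e0, hub⟩ : {v : G.V // v ≠ G.base}).1 :=
        fun h => x.2 (Subtype.ext h)
      rw [if_neg hxu, hyw']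
      dsimp only
      push_cast
      ring
    · have hyw'' : y.1.1 ≠ G.tgt e0 := fun h => hyw (Subtype.ext h)
      rw [if_neg hyw, if_neg hyw'', matM_apply]

lemma det_contract {e0 : G.E} (hc : G.Contractible e0) :
    (G.contract e0).detIAminus = G.detIAminus := by
  rcases hc with ⟨hne, h | h⟩
  · exact det_contract_A hne h.1 h.2
  · have h' := det_contract_A (G := G.rev) (e0 := e0)
      (fun hh => hne hh.symm) h.1 h.2
    rw [rev_contract, detIAminus_rev, detIAminus_rev] at h'
    exact h'

lemma part2aux : ∀ n : ℕ, ∀ G : PGraph, Nat.card G.E = n → G.Wk → ¬ G.Stabilizable →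
    G.detIAminus = 0 := by
  intro n
  induction n using Nat.strong_induction_on with | _ n ih =>
  intro G hn hW hstab
  by_cases hex : ∃ e0, G.Contractible e0
  · obtain ⟨e0, hc⟩ := hex
    have hcard : Nat.card (G.contract e0).E < n := by
      subst hn
      cases nonempty_fintype G.E
      classical
      have h2 : Nat.card {e : G.E // e ≠ e0} < Nat.card G.E := by
        rw [Nat.card_eq_fintype_card, Nat.card_eq_fintype_card]
        exact Fintype.card_subtype_lt (x := e0) (by simp)
      exact h2
    rw [← det_contract hc]
    exact ih _ hcard _ rfl (hW.contract hc) (not_stabilizable_contract hc hstab)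
  · push_neg at hex
    apply det_zero_of_no_contractible hW hex
    intro hst
    exact hstab ⟨G, Relation.ReflTransGen.refl, hst⟩

end PGraph

/-- In a semistable pointed graph with no contractible edges that is
non-stabilizable, every strictly semistable ordinary vertex (total degree 3) carries a
self-loop; consequently det(I − A(Γ₋)) = 0 for any non-stabilizable semistable
pointed graph. -/
theorem nonstabilizable_loop_and_det :
    (∀ Γ : PGraph, Γ.Semistable → (∀ e : Γ.E, ¬ Γ.Contractible e) → ¬ Γ.Stabilizable →
      ∀ v : Γ.V, v ≠ Γ.base → Γ.degIn v + Γ.degOut v = 3 →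
        ∃ e : Γ.E, Γ.src e = v ∧ Γ.tgt e = v) ∧
    (∀ Γ : PGraph, Γ.Semistable → ¬ Γ.Stabilizable → Γ.detIAminus = 0) := by
  constructor
  · intro Γ hss hnc _ v hv hdeg
    obtain ⟨ha, hb, hc2⟩ := hss v hv
    rcases (show Γ.degIn v = 1 ∨ Γ.degOut v = 1 by omega) with hd | hd
    · obtain ⟨e, he⟩ := PGraph.degIn_pos_iff.mp ha
      have hst : Γ.src e = Γ.tgt e := by
        by_contra hne
        exact hnc e ⟨hne, Or.inr ⟨he.symm ▸ hv, by rw [he]; exact hd⟩⟩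
      exact ⟨e, by rw [hst, he], he⟩
    · obtain ⟨e, he⟩ := PGraph.degOut_pos_iff.mp hb
      have hst : Γ.src e = Γ.tgt e := by
        by_contra hne
        exact hnc e ⟨hne, Or.inl ⟨he.symm ▸ hv, by rw [he]; exact hd⟩⟩
      exact ⟨e, he, by rw [← hst, he]⟩
  · intro Γ hss hstab
    exact PGraph.part2aux _ Γ rfl (PGraph.Wk.of_semistable hss) hstab
end
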